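/- Metasubstitution Lemma I (associativity of metasubstitution): given terms Θ ▹ Γ, x⃗ᵢ ⊢ rᵢ (1 ≤ i ≤ k), Θ ▹ Γ, y⃗ⱼ ⊢ sⱼ (1 ≤ j ≤ l), and 𝕞₁:[m₁],…,𝕞_k:[m_k], 𝕟₁:[n₁],…,𝕟_l:[n_l] ▹ Γ ⊢ t, one has the equality of terms in context Θ ▹ Γ: t{𝕞ᵢ := (x⃗ᵢ)rᵢ}_{i∈[k]}{𝕟ⱼ := (y⃗ⱼ)sⱼ}_{j∈[l]} = t{𝕟ⱼ := (y⃗ⱼ)sⱼ}_{j∈[l]}{𝕞ᵢ := (x⃗ᵢ)(rᵢ{𝕟ⱼ := (y⃗ⱼ)sⱼ}_{j∈[l]})}_{i∈[k]}. -/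

import Mathlib

/-! ## Second-order syntax (de Bruijn representation)

An arity/sequence `(m₁,…,m_k) ∈ ℕ*` is a `Ctxa`.  A second-order signature is a set of
operators with such arities.  Terms in a metavariable context (given by a type `M` of
metavariables with meta-arities `mar : M → ℕ`) and a variable context of size `n` are
generated by variables, metavariables applied to their parameters, and operators binding
variables in their arguments.  Working with de Bruijn indices gives terms up to
α-equivalence. -/

/-- A finite sequence `(m₁,…,m_k)` of natural numbers (an element of ℕ*). -/
structure Ctxa where
  len : ℕ
  ar : Fin len → ℕ

/-- A second-order signature: a set of operators with arities `(n₁,…,n_k) ∈ ℕ*`;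
an operator of arity `(n₁,…,n_k)` takes `k` arguments and binds `nᵢ` variables in the
`i`-th argument. -/
structure SOSig : Type 1 where
  Op : Type
  arity : Op → Ctxa

namespace SO

/-- Second-order terms over the signature `S`, in metavariable context `(M, mar)` and
variable context of size `n` (variables are de Bruijn indices `Fin n`, so terms are
automatically identified up to α-equivalence). -/
inductive Term (S : SOSig) (M : Type) (mar : M → ℕ) : ℕ → Type
  | var {n : ℕ} : Fin n → Term S M mar n
  | mvar {n : ℕ} (m : M) (ts : Fin (mar m) → Term S M mar n) : Term S M mar n
  | op {n : ℕ} (o : S.Op)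
      (ts : ∀ i : Fin (S.arity o).len, Term S M mar (n + (S.arity o).ar i)) :
      Term S M mar n

namespace Term

variable {S : SOSig} {M M' : Type} {mar : M → ℕ} {mar' : M' → ℕ}

/-- Cast a term along an equality of variable-context sizes. -/
def castCtx {n n' : ℕ} (h : n = n') (t : Term S M mar n) : Term S M mar n' := h ▸ t

/-- Extend a renaming to a context enlarged by `p` bound variables. -/
def extRen {n n' : ℕ} (ρ : Fin n → Fin n') (p : ℕ) : Fin (n + p) → Fin (n' + p) :=
  Fin.addCases (fun j => Fin.castAdd p (ρ j)) (fun j => Fin.natAdd n' j)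

/-- Renaming of variables. -/
def rename : ∀ {n n' : ℕ}, Term S M mar n → (Fin n → Fin n') → Term S M mar n'
  | _, _, .var x, ρ => .var (ρ x)
  | _, _, .mvar m ts, ρ => .mvar m (fun j => rename (ts j) ρ)
  | _, _, .op o ts, ρ => .op o (fun i => rename (ts i) (extRen ρ _))

/-- Weakening of a term by `p` fresh variables (added at the end of the context). -/
def weaken {n : ℕ} (p : ℕ) (t : Term S M mar n) : Term S M mar (n + p) :=
  rename t (Fin.castAdd p)

/-- Extend a simultaneous substitution to a context enlarged by `p` bound variables
(the bound variables are mapped to themselves). -/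
def extSub {n n' : ℕ} (σ : Fin n → Term S M mar n') (p : ℕ) :
    Fin (n + p) → Term S M mar (n' + p) :=
  Fin.addCases (fun j => weaken p (σ j)) (fun j => .var (Fin.natAdd n' j))

/-- Capture-avoiding simultaneous substitution `t{xᵢ := σ(i)}` of terms for variables. -/
def subst : ∀ {n n' : ℕ}, Term S M mar n → (Fin n → Term S M mar n') → Term S M mar n'
  | _, _, .var x, σ => σ x
  | _, _, .mvar m ts, σ => .mvar m (fun j => subst (ts j) σ)
  | _, _, .op o ts, σ => .op o (fun i => subst (ts i) (extSub σ _))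

/-- The renaming inserting `p` fresh variables in the middle of a context `n' + a`
(between the first `n'` variables and the last `a` bound ones). -/
def midWeak (n' p a : ℕ) : Fin (n' + a) → Fin (n' + p + a) :=
  Fin.addCases (fun j => Fin.castAdd a (Fin.castAdd p j)) (fun j => Fin.natAdd (n' + p) j)

/-- Metasubstitution `t{𝕞 := (x⃗_𝕞)s(𝕞)}` (simultaneously renaming the variables of `t`
along `ρ`): each metavariable `𝕞` of meta-arity `mar 𝕞` is replaced by the term
`s 𝕞`, which lives in the target context extended by `mar 𝕞` abstracted variables;
the parameters of `𝕞` are substituted for those abstracted variables. -/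
def msubst : ∀ {n n' : ℕ}, Term S M mar n → (Fin n → Fin n') →
    (∀ m : M, Term S M' mar' (n' + mar m)) → Term S M' mar' n'
  | _, _, .var x, ρ, _ => .var (ρ x)
  | _, _, .mvar m ts, ρ, s =>
      subst (s m) (Fin.addCases (fun j => .var j) (fun j => msubst (ts j) ρ s))
  | _, _, .op o ts, ρ, s =>
      .op o (fun i => msubst (ts i) (extRen ρ _) (fun m => rename (s m) (midWeak _ _ _)))

end Term

end SO
namespace SO
namespace Term
/-- The generic expansion `𝕞[x₁,…,x_{mar 𝕞}]` of a metavariable, in a context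
`g + mar 𝕞` whose last `mar 𝕞` variables are the parameters. -/
def genMvar {S : SOSig} {M : Type} {mar : M → ℕ} (g : ℕ) (m : M) :
    Term S M mar (g + mar m) :=
  .mvar m (fun v => .var (Fin.natAdd g v))
end Term
end SO
/-- Dependent case analysis on a sum type (used to split a concatenated
metavariable context). -/
def sumElim' {α β : Type} {f : α ⊕ β → Sort*} (l : ∀ a, f (.inl a)) (r : ∀ b, f (.inr b)) :
    ∀ x, f x
  | .inl a => l a
  | .inr b => r b

namespace SO
namespace Term

variable {S : SOSig} {M M' M'' : Type} {mar : M → ℕ} {mar' : M' → ℕ} {mar'' : M'' → ℕ}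

@[simp] lemma extRen_castAdd {n n' p : ℕ} (ρ : Fin n → Fin n') (j : Fin n) :
    extRen ρ p (Fin.castAdd p j) = Fin.castAdd p (ρ j) := by
  simp [extRen]

@[simp] lemma extRen_natAdd {n n' p : ℕ} (ρ : Fin n → Fin n') (j : Fin p) :
    extRen ρ p (Fin.natAdd n j) = Fin.natAdd n' j := by
  simp [extRen]

lemma extRen_extRen {n n' n'' p : ℕ} (f : Fin n' → Fin n'') (g : Fin n → Fin n')
    (x : Fin (n + p)) : extRen f p (extRen g p x) = extRen (f ∘ g) p x := by
  induction x using Fin.addCases <;> simp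

@[simp] lemma extRen_id {n p : ℕ} (x : Fin (n + p)) : extRen (id : Fin n → Fin n) p x = x := by
  induction x using Fin.addCases <;> simp

lemma midWeak_eq {n p a : ℕ} (x : Fin (n + a)) :
    midWeak n p a x = extRen (Fin.castAdd p) a x := by
  induction x using Fin.addCases <;> simp [midWeak]

@[simp] lemma midWeak_castAdd {n p a : ℕ} (j : Fin n) :
    midWeak n p a (Fin.castAdd a j) = Fin.castAdd a (Fin.castAdd p j) := by
  simp [midWeak]

@[simp] lemma midWeak_natAdd {n p a : ℕ} (j : Fin a) :
    midWeak n p a (Fin.natAdd n j) = Fin.natAdd (n + p) j := by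
  simp [midWeak]

lemma extRen_midWeak {n n' p q : ℕ} (g : Fin n → Fin n') (x : Fin (n + q)) :
    extRen (extRen g p) q (midWeak n p q x) = midWeak n' p q (extRen g q x) := by
  induction x using Fin.addCases <;> simp

lemma midWeak_midWeak {n p q a : ℕ} (x : Fin (n + a)) :
    midWeak (n + p) q a (midWeak n p a x)
      = extRen (midWeak n p q) a (midWeak n q a x) := by
  induction x using Fin.addCases <;> simp

@[simp] lemma extSub_castAdd {n n' p : ℕ} (σ : Fin n → Term S M mar n') (j : Fin n) :
    extSub σ p (Fin.castAdd p j) = weaken p (σ j) := by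
  simp [extSub]

@[simp] lemma extSub_natAdd {n n' p : ℕ} (σ : Fin n → Term S M mar n') (j : Fin p) :
    extSub σ p (Fin.natAdd n j) = .var (Fin.natAdd n' j) := by
  simp [extSub]

lemma rename_congr {n n' : ℕ} (t : Term S M mar n) {f g : Fin n → Fin n'}
    (h : ∀ x, f x = g x) : rename t f = rename t g := by
  rw [show f = g from funext h]

lemma subst_congr {n n' : ℕ} (t : Term S M mar n) {f g : Fin n → Term S M mar n'}
    (h : ∀ x, f x = g x) : subst t f = subst t g := by
  rw [show f = g from funext h]

lemma msubst_congr {n n' : ℕ} (t : Term S M mar n) {ρ ρ' : Fin n → Fin n'}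
    {s s' : ∀ m : M, Term S M' mar' (n' + mar m)}
    (hρ : ∀ x, ρ x = ρ' x) (hs : ∀ m, s m = s' m) : msubst t ρ s = msubst t ρ' s' := by
  rw [show ρ = ρ' from funext hρ, show s = s' from funext hs]

lemma rename_rename : ∀ {n n' n'' : ℕ} (t : Term S M mar n) (f : Fin n → Fin n')
    (g : Fin n' → Fin n''), rename (rename t f) g = rename t (g ∘ f) := by
  intro n n' n'' t
  induction t generalizing n' n'' with
  | var x => intro f g; rfl
  | mvar m ts ih => intro f g; simp only [rename]; exact congrArg _ (funext fun j => ih j f g)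
  | op o ts ih =>
      intro f g
      simp only [rename]
      refine congrArg _ (funext fun i => ?_)
      rw [ih i (extRen f _) (extRen g _)]
      exact rename_congr _ fun x => extRen_extRen g f x

lemma subst_rename : ∀ {n n' n'' : ℕ} (t : Term S M mar n) (f : Fin n → Fin n')
    (σ : Fin n' → Term S M mar n''), subst (rename t f) σ = subst t (σ ∘ f) := by
  intro n n' n'' t
  induction t generalizing n' n'' with
  | var x => intro f σ; rfl
  | mvar m ts ih => intro f σ; simp only [rename, subst]; exact congrArg _ (funext fun j => ih j f σ)
  | op o ts ih =>
      intro f σ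
      simp only [rename, subst]
      refine congrArg _ (funext fun i => ?_)
      rw [ih i (extRen f _) (extSub σ _)]
      refine subst_congr _ fun x => ?_
      induction x using Fin.addCases <;> simp

lemma rename_subst : ∀ {n n' n'' : ℕ} (t : Term S M mar n) (σ : Fin n → Term S M mar n')
    (g : Fin n' → Fin n''), rename (subst t σ) g = subst t (fun x => rename (σ x) g) := by
  intro n n' n'' t
  induction t generalizing n' n'' with
  | var x => intro σ g; rfl
  | mvar m ts ih => intro σ g; simp only [rename, subst]; exact congrArg _ (funext fun j => ih j σ g)
  | op o ts ih =>
      intro σ g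
      simp only [rename, subst]
      refine congrArg _ (funext fun i => ?_)
      rw [ih i (extSub σ _) (extRen g _)]
      refine subst_congr _ fun x => ?_
      induction x using Fin.addCases with
      | left j =>
          simp only [extSub_castAdd, weaken, rename_rename]
          exact rename_congr _ fun y => by simp
      | right j => simp [rename]

@[simp] lemma subst_var : ∀ {n : ℕ} (t : Term S M mar n),
    subst t (fun x => Term.var x) = t := by
  intro n t
  induction t with
  | var x => rfl
  | mvar m ts ih => simp only [subst]; exact congrArg _ (funext fun j => ih j)
  | op o ts ih =>
      simp only [subst]
      refine congrArg _ (funext fun i => ?_)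
      rw [show extSub (fun x => (Term.var x : Term S M mar _)) _ = fun x => Term.var x from
        funext fun x => by induction x using Fin.addCases <;> simp [weaken, rename]]
      exact ih i

lemma subst_subst : ∀ {n n' n'' : ℕ} (t : Term S M mar n) (σ : Fin n → Term S M mar n')
    (σ' : Fin n' → Term S M mar n''),
    subst (subst t σ) σ' = subst t (fun x => subst (σ x) σ') := by
  intro n n' n'' t
  induction t generalizing n' n'' with
  | var x => intro σ σ'; rfl
  | mvar m ts ih => intro σ σ'; simp only [subst]; exact congrArg _ (funext fun j => ih j σ σ')
  | op o ts ih =>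
      intro σ σ'
      simp only [subst]
      refine congrArg _ (funext fun i => ?_)
      rw [ih i (extSub σ _) (extSub σ' _)]
      refine subst_congr _ fun x => ?_
      induction x using Fin.addCases with
      | left j =>
          simp only [extSub_castAdd, weaken, subst_rename, rename_subst]
          exact subst_congr _ fun y => by simp [weaken]
      | right j => simp [subst]

lemma msubst_rename : ∀ {n n' n'' : ℕ} (t : Term S M mar n) (f : Fin n → Fin n')
    (ρ : Fin n' → Fin n'') (s : ∀ m : M, Term S M' mar' (n'' + mar m)),
    msubst (rename t f) ρ s = msubst t (ρ ∘ f) s := by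
  intro n n' n'' t
  induction t generalizing n' n'' with
  | var x => intro f ρ s; rfl
  | mvar m ts ih =>
      intro f ρ s
      simp only [rename, msubst]
      refine subst_congr _ fun x => ?_
      induction x using Fin.addCases <;> simp [ih]
  | op o ts ih =>
      intro f ρ s
      simp only [rename, msubst]
      refine congrArg _ (funext fun i => ?_)
      rw [ih i (extRen f _) (extRen ρ _)]
      exact msubst_congr _ (fun x => extRen_extRen ρ f x) (fun m => rfl)

lemma rename_msubst : ∀ {n n' n'' : ℕ} (t : Term S M mar n) (ρ : Fin n → Fin n')
    (s : ∀ m : M, Term S M' mar' (n' + mar m)) (g : Fin n' → Fin n''),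
    rename (msubst t ρ s) g
      = msubst t (g ∘ ρ) (fun m => rename (s m) (extRen g (mar m))) := by
  intro n n' n'' t
  induction t generalizing n' n'' with
  | var x => intro ρ s g; rfl
  | mvar m ts ih =>
      intro ρ s g
      simp only [msubst, rename_subst, subst_rename]
      refine subst_congr _ fun x => ?_
      induction x using Fin.addCases with
      | left j => simp [rename]
      | right j => simp [ih]
  | op o ts ih =>
      intro ρ s g
      simp only [rename, msubst]
      refine congrArg _ (funext fun i => ?_)
      rw [ih i (extRen ρ _) _ (extRen g _)]
      refine msubst_congr _ (fun x => extRen_extRen g ρ x) (fun m => ?_)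
      rw [rename_rename, rename_rename]
      exact rename_congr _ fun x => extRen_midWeak g x

lemma msubst_subst_aux :
    ∀ {na n₁ : ℕ} (a : Term S M mar na) {nb n₂ : ℕ}
      (σ : Fin na → Term S M mar n₁) (ρ : Fin n₁ → Fin n₂)
      (s : ∀ m : M, Term S M' mar' (n₂ + mar m))
      (ρ₁ : Fin na → Fin nb) (σ₁ : Fin nb → Term S M' mar' n₂) (ι : Fin n₂ → Fin nb)
      (h1 : ∀ x, msubst (σ x) ρ s = σ₁ (ρ₁ x))
      (hι : ∀ j, σ₁ (ι j) = .var j),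
      msubst (subst a σ) ρ s
        = subst (msubst a ρ₁ (fun m => rename (s m) (extRen ι (mar m)))) σ₁ := by
  intro na n₁ a
  induction a generalizing n₁ with
  | var x => intro nb n₂ σ ρ s ρ₁ σ₁ ι h1 hι; exact h1 x
  | mvar m ts ih =>
      intro nb n₂ σ ρ s ρ₁ σ₁ ι h1 hι
      simp only [subst, msubst, subst_subst, subst_rename]
      refine subst_congr _ fun x => ?_
      induction x using Fin.addCases with
      | left j => simp [subst, hι]
      | right j => simp [subst, ih j σ ρ s ρ₁ σ₁ ι h1 hι]
  | op o ts ih =>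
      intro nb n₂ σ ρ s ρ₁ σ₁ ι h1 hι
      simp only [subst, msubst]
      refine congrArg _ (funext fun i => ?_)
      rw [ih i (extSub σ _) (extRen ρ _)
          (fun m => rename (s m) (midWeak n₂ _ (mar m)))
          (extRen ρ₁ _) (extSub σ₁ _) (extRen ι _) ?_ ?_]
      · refine congrArg (fun u => subst u (extSub σ₁ _)) (msubst_congr _ (fun x => rfl) (fun m => ?_))
        rw [rename_rename, rename_rename]
        exact rename_congr _ fun x => extRen_midWeak ι x
      · intro x
        induction x using Fin.addCases with
        | left j =>
            rw [extSub_castAdd, extRen_castAdd, extSub_castAdd, ← h1 j]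
            simp only [weaken, msubst_rename, rename_msubst]
            refine msubst_congr _ (fun y => by simp [Function.comp]) (fun m => ?_)
            exact rename_congr _ fun y => midWeak_eq y
        | right j => simp [msubst]
      · intro j
        induction j using Fin.addCases with
        | left j0 => simp [weaken, hι, rename]
        | right j0 => simp

lemma msubst_msubst :
    ∀ {n n' : ℕ} (t : Term S M mar n) {n'' : ℕ} (ρ : Fin n → Fin n')
      (s : ∀ m : M, Term S M' mar' (n' + mar m))
      (ρ' : Fin n' → Fin n'') (s' : ∀ m' : M', Term S M'' mar'' (n'' + mar' m')),
      msubst (msubst t ρ s) ρ' s'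
        = msubst t (ρ' ∘ ρ) (fun m =>
            msubst (s m) (extRen ρ' (mar m))
              (fun m' => rename (s' m') (midWeak n'' (mar m) (mar' m')))) := by
  intro n n' t
  induction t generalizing n' with
  | var x => intro n'' ρ s ρ' s'; rfl
  | mvar m ts ih =>
      intro n'' ρ s ρ' s'
      simp only [msubst]
      rw [msubst_subst_aux (s m)
          (Fin.addCases (fun j => .var j) (fun j => msubst (ts j) ρ s)) ρ' s'
          (extRen ρ' (mar m))
          (Fin.addCases (fun j => .var j)
            (fun j => msubst (ts j) (ρ' ∘ ρ) (fun m => msubst (s m) (extRen ρ' (mar m))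
              (fun m' => rename (s' m') (midWeak _ (mar m) (mar' m'))))))
          (Fin.castAdd (mar m)) ?_ ?_]
      · refine congrArg (fun u => subst u _) (msubst_congr _ (fun x => rfl) (fun m' => ?_))
        exact rename_congr _ fun x => (midWeak_eq x).symm
      · intro x
        induction x using Fin.addCases with
        | left j => simp [msubst]
        | right j => simp [ih]
      · intro j; simp
  | op o ts ih =>
      intro n'' ρ s ρ' s'
      simp only [msubst]
      refine congrArg _ (funext fun i => ?_)
      rw [ih i (extRen ρ _) _ (extRen ρ' _) _]
      refine msubst_congr _ (fun x => extRen_extRen ρ' ρ x) (fun m => ?_)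
      rw [msubst_rename, rename_msubst]
      refine msubst_congr _ (fun x => ?_) (fun m' => ?_)
      · exact (Function.comp_apply .. ).trans (extRen_midWeak ρ' x)
      · rw [rename_rename, rename_rename]
        exact rename_congr _ fun x => midWeak_midWeak x

end Term
end SO

open SO SO.Term

/-- **Metasubstitution Lemma I** (associativity of metasubstitution).
Given terms `Θ ▹ Γ, x⃗ᵢ ⊢ rᵢ` (`1 ≤ i ≤ k`), `Θ ▹ Γ, y⃗ⱼ ⊢ sⱼ` (`1 ≤ j ≤ l`), and
`𝕞₁:[m₁],…,𝕞_k:[m_k], 𝕟₁:[n₁],…,𝕟_l:[n_l] ▹ Γ ⊢ t`, one has the equality of terms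
in context `Θ ▹ Γ`:
`t{𝕞ᵢ := (x⃗ᵢ)rᵢ}{𝕟ⱼ := (y⃗ⱼ)sⱼ} = t{𝕟ⱼ := (y⃗ⱼ)sⱼ}{𝕞ᵢ := (x⃗ᵢ)(rᵢ{𝕟ⱼ := (y⃗ⱼ)sⱼ})}`.
Here the metavariable context of `t` is the concatenation `𝕞⃗,𝕟⃗` (represented as a sum
`Fin k ⊕ Fin l`); in the first step `{𝕞ᵢ := (x⃗ᵢ)rᵢ}` the metavariables `𝕟ⱼ` are kept
(sent to their generic expansions `𝕟ⱼ[y⃗ⱼ]`), so the `rᵢ` live over a metavariable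
context containing the `𝕟ⱼ` together with the ambient context `Θ` (represented as
`Fin l ⊕ X`), while the `sⱼ` live over `Θ` (represented as `X`). -/
theorem metasubstitution_lemma_I
    {S : SOSig} {k l : ℕ} {kar : Fin k → ℕ} {lar : Fin l → ℕ}
    {X : Type} {xar : X → ℕ} {g : ℕ}
    (t : Term S (Fin k ⊕ Fin l) (Sum.elim kar lar) g)
    (r : ∀ i : Fin k, Term S (Fin l ⊕ X) (Sum.elim lar xar) (g + kar i))
    (s : ∀ j : Fin l, Term S X xar (g + lar j)) :
    msubst
        (msubst t id (sumElim' r (fun j => genMvar g (Sum.inl j))))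
        id (sumElim' s (fun x => genMvar g x))
      = msubst t id
          (sumElim'
            (fun i => msubst (r i) id
              (sumElim' (fun j => rename (s j) (midWeak g (kar i) (lar j)))
                (fun x => genMvar (g + kar i) x)))
            s) := by
  rw [msubst_msubst]
  refine msubst_congr _ (fun x => rfl) (fun m => ?_)
  cases m with
  | inl i =>
      refine msubst_congr _ (fun x => extRen_id x) (fun m' => ?_)
      cases m' with
      | inl j => rfl
      | inr x =>
          simp only [sumElim', genMvar, rename]
          exact congrArg _ (funext fun v => by show (var (midWeak g (kar i) (xar x) (Fin.natAdd g v)) : Term S X xar _) = _; rw [midWeak_natAdd])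
  | inr j =>
      simp only [sumElim', genMvar, msubst, Sum.elim_inl, Sum.elim_inr, subst_rename]
      refine Eq.trans (subst_congr _ fun x => ?_) (subst_var _)
      induction x using Fin.addCases with
      | left j0 => simp [msubst]
      | right j0 => simp [msubst]
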